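/- In Equiv.Perm (ℤ × ℤ), let τ be the permutation τ (i, j) = (i + 1, j) and let σ be the permutation with σ (i, j) = (i, j + 1) if i = 0 and σ (i, j) = (i, j) if i ≠ 0. For n : ℤ set gₙ = τ^n * σ * τ^(−n). Then the elements gₙ pairwise commute, and the subgroup of Equiv.Perm (ℤ × ℤ) generated by {gₙ | n : ℤ} is free abelian of countably infinite rank: the group homomorphism from the direct sum ⨁ (n : ℤ), ℤ that sends the n-th standard basis element to gₙ is injective. -/

import Mathlib

/-- The permutation `c` of the comb digraph: shift the first coordinate. -/
def combTau : Equiv.Perm (ℤ × ℤ) where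
  toFun p := (p.1 + 1, p.2)
  invFun p := (p.1 - 1, p.2)
  left_inv p := by simp
  right_inv p := by simp

/-- The permutation `a` of the comb digraph: shift the second coordinate on the line `i = 0`,
fix everything else. -/
def combSigma : Equiv.Perm (ℤ × ℤ) where
  toFun p := if p.1 = 0 then (p.1, p.2 + 1) else p
  invFun p := if p.1 = 0 then (p.1, p.2 - 1) else p
  left_inv p := by by_cases h : p.1 = 0 <;> simp [h, Prod.ext_iff]
  right_inv p := by by_cases h : p.1 = 0 <;> simp [h, Prod.ext_iff]

/-- The element `gₙ = τⁿ σ τ⁻ⁿ`. -/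
def combG (n : ℤ) : Equiv.Perm (ℤ × ℤ) := combTau ^ n * combSigma * (combTau ^ n)⁻¹

lemma combTau_zpow (n : ℤ) (p : ℤ × ℤ) : (combTau ^ n) p = (p.1 + n, p.2) := by
  induction n using Int.induction_on generalizing p with
  | zero => simp
  | succ k ih =>
      have h : combTau ^ ((k : ℤ) + 1) = combTau ^ (k : ℤ) * combTau := by
        rw [zpow_add, zpow_one]
      rw [h]
      have h1 : combTau p = (p.1 + 1, p.2) := rfl
      rw [Equiv.Perm.mul_apply, h1, ih]
      simp; ring
  | pred k ih =>
      have h : combTau ^ (-(k : ℤ) - 1) = combTau ^ (-(k : ℤ)) * combTau⁻¹ := by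
        rw [zpow_sub, zpow_one]
      rw [h]
      have h1 : (combTau⁻¹ p) = (p.1 - 1, p.2) := rfl
      rw [Equiv.Perm.mul_apply, h1, ih]
      simp; ring

lemma combG_apply (n : ℤ) (p : ℤ × ℤ) :
    combG n p = if p.1 = n then (p.1, p.2 + 1) else p := by
  have hinv : ((combTau ^ n)⁻¹) p = (p.1 - n, p.2) := by
    have h := combTau_zpow n (p.1 - n, p.2)
    simp only [sub_add_cancel] at h
    have h2 := congrArg (⇑(combTau ^ n)⁻¹) h
    rw [show ∀ x, (combTau ^ n)⁻¹ ((combTau ^ n) x) = x from fun x => (combTau ^ n).symm_apply_apply x] at h2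
    rw [← h2]
  simp only [combG, Equiv.Perm.mul_apply, hinv]
  by_cases h : p.1 = n
  · have hs : combSigma (p.1 - n, p.2) = (p.1 - n, p.2 + 1) := by
      simp [combSigma, h]
    rw [hs, combTau_zpow]
    simp [h]
  · have hs : combSigma (p.1 - n, p.2) = (p.1 - n, p.2) := by
      simp only [combSigma, Equiv.coe_fn_mk]
      rw [if_neg]
      intro hh
      exact h (by linarith)
    rw [hs, combTau_zpow]
    simp [h]

/-- Permutation attached to an element of the direct sum. -/
def combP (f : DirectSum ℤ fun _ => ℤ) : Equiv.Perm (ℤ × ℤ) where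
  toFun p := (p.1, p.2 + f p.1)
  invFun p := (p.1, p.2 - f p.1)
  left_inv p := by simp
  right_inv p := by simp

def combPhi : Multiplicative (DirectSum ℤ fun _ => ℤ) →* Equiv.Perm (ℤ × ℤ) where
  toFun f := combP (Multiplicative.toAdd f)
  map_one' := by
    ext p
    · rfl
    · show p.2 + (0 : DirectSum ℤ fun _ => ℤ) p.1 = p.2
      simp
  map_mul' f g := by
    ext p
    · rfl
    · show p.2 + (Multiplicative.toAdd f + Multiplicative.toAdd g) p.1 = _
      rw [DirectSum.add_apply]
      show _ = (p.2 + (Multiplicative.toAdd g) p.1) + (Multiplicative.toAdd f) p.1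
      ring

lemma combPhi_of (n : ℤ) :
    combPhi (Multiplicative.ofAdd (DirectSum.of (fun _ : ℤ => ℤ) n 1)) = combG n := by
  ext p
  · rw [combG_apply]
    split <;> rfl
  · rw [combG_apply]
    show p.2 + (DirectSum.of (fun _ : ℤ => ℤ) n 1) p.1 = _
    by_cases h : p.1 = n
    · subst h
      simp [DirectSum.of_apply]
    · rw [if_neg h, DirectSum.of_apply]
      have : ¬ (n = p.1) := fun hh => h hh.symm
      simp [this]

lemma combPhi_inj : Function.Injective combPhi := by
  intro f g h
  have h2 : ∀ i : ℤ, (Multiplicative.toAdd f) i = (Multiplicative.toAdd g) i := by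
    intro i
    have h3 := congrArg (fun e : Equiv.Perm (ℤ × ℤ) => (e (i, 0)).2) h
    simpa [combPhi, combP] using h3
  exact Multiplicative.toAdd.injective (DFunLike.ext _ _ h2)

/-- The elements `gₙ = τⁿ σ τ⁻ⁿ` pairwise commute, and the subgroup they generate is free
abelian of countably infinite rank: the homomorphism from `⨁ (n : ℤ), ℤ` sending the `n`-th
standard basis element to `gₙ` is injective, with range the subgroup generated by the `gₙ`. -/
theorem stmt17 :
    (∀ m n : ℤ, combG m * combG n = combG n * combG m) ∧
    ∃ φ : Multiplicative (DirectSum ℤ fun _ => ℤ) →* Equiv.Perm (ℤ × ℤ),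
      (∀ n : ℤ, φ (Multiplicative.ofAdd (DirectSum.of (fun _ : ℤ => ℤ) n 1)) = combG n) ∧
      Function.Injective φ ∧
      φ.range = Subgroup.closure {x | ∃ n : ℤ, x = combG n} := by
  constructor
  · intro m n
    apply Equiv.ext; intro p
    simp only [Equiv.Perm.mul_apply, combG_apply]
    split_ifs <;> simp_all
  · refine ⟨combPhi, combPhi_of, combPhi_inj, le_antisymm ?_ ?_⟩
    · have key : ∀ g : DirectSum ℤ fun _ => ℤ,
          combPhi (Multiplicative.ofAdd g) ∈
            Subgroup.closure {x | ∃ n : ℤ, x = combG n} := by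
        intro g
        induction g using DirectSum.induction_on with
        | zero =>
            rw [show Multiplicative.ofAdd (0 : DirectSum ℤ fun _ => ℤ) = 1 from rfl,
              map_one]
            exact one_mem _
        | of i x =>
            have hx : DirectSum.of (fun _ : ℤ => ℤ) i x =
                x • DirectSum.of (fun _ : ℤ => ℤ) i 1 := by
              rw [← map_zsmul]
              norm_num
            rw [hx, show Multiplicative.ofAdd (x • DirectSum.of (fun _ : ℤ => ℤ) i 1) =
              (Multiplicative.ofAdd (DirectSum.of (fun _ : ℤ => ℤ) i 1)) ^ x from rfl,
              map_zpow, combPhi_of]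
            exact zpow_mem (Subgroup.subset_closure (show combG i ∈ {x | ∃ n : ℤ, x = combG n} from ⟨i, rfl⟩)) x
        | add a b ha hb =>
            rw [show Multiplicative.ofAdd (a + b) =
              Multiplicative.ofAdd a * Multiplicative.ofAdd b from rfl, map_mul]
            exact mul_mem ha hb
      rintro x ⟨f, rfl⟩
      exact key (Multiplicative.toAdd f)
    · rw [Subgroup.closure_le]
      rintro x ⟨n, rfl⟩
      exact MonoidHom.mem_range.mpr ⟨_, combPhi_of n⟩
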